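/- The number of 213-avoiding permutations of {1,...,n} fixing 1 equals the number of 312-avoiding permutations of {1,...,n} fixing 1, and both equal the Catalan number C_{n-1}. -/

import Mathlib

open List Finset

namespace Stmt15

/-- Avoidance of a 3-element pattern `P` (on values) as subsequences. -/
def AvP (P : ℕ → ℕ → ℕ → Prop) (l : List ℕ) : Prop :=
  ∀ x y z : ℕ, [x, y, z] <+ l → ¬ P x y z

def P213 (x y z : ℕ) : Prop := y < x ∧ x < z
def P312 (x y z : ℕ) : Prop := y < z ∧ z < x

theorem AvP.sublist {P l l'} (h : AvP P l) (hs : l' <+ l) : AvP P l' :=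
  fun x y z hxyz => h x y z (hxyz.trans hs)

/-- elements at three increasing indices form a sublist -/
theorem trio_sublist {α : Type*} (l : List α) {i j k : ℕ} (hij : i < j) (hjk : j < k)
    (hk : k < l.length) : [l[i]'(by omega), l[j]'(by omega), l[k]'(hk)] <+ l := by
  have hj : j < l.length := by omega
  have h1 : [l[i]'(by omega)] <+ l.take j := by
    rw [List.singleton_sublist]
    have : (l.take j)[i]'(by simp [hj]; omega) = l[i]'(by omega) := List.getElem_take ..
    rw [← this]; exact List.getElem_mem _
  have h2 : [l[j]'(hj), l[k]'(hk)] <+ l.drop j := by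
    rw [List.drop_eq_getElem_cons hj]
    refine List.Sublist.cons₂ _ ?_
    rw [List.singleton_sublist]
    have : (l.drop (j+1))[k - (j+1)]'(by simp; omega) = l[k]'(hk) := by
      rw [List.getElem_drop]; congr 1; omega
    rw [← this]; exact List.getElem_mem _
  have := h1.append h2
  rwa [List.take_append_drop] at this

theorem perm_of_nodup_toFinset_eq {l₁ l₂ : List ℕ} (h₁ : l₁.Nodup) (h₂ : l₂.Nodup)
    (h : l₁.toFinset = l₂.toFinset) : l₁ ~ l₂ := by
  have := congrArg Finset.val h
  simp only [List.toFinset, Multiset.toFinset_val] at this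
  rw [Multiset.dedup_eq_self.2 (by exact_mod_cast h₁), Multiset.dedup_eq_self.2 (by exact_mod_cast h₂)] at this
  exact Quotient.exact this


open scoped Classical in
noncomputable def NP (P : ℕ → ℕ → ℕ → Prop) (S : Finset ℕ) : ℕ :=
  (((S.sort (· ≤ ·)).permutations.toFinset).filter (AvP P)).card

theorem mem_permsOf {S : Finset ℕ} {l : List ℕ} :
    l ∈ (S.sort (· ≤ ·)).permutations.toFinset ↔ l.Nodup ∧ l.toFinset = S := by
  rw [List.mem_toFinset, List.mem_permutations]
  constructor
  · intro h
    refine ⟨h.nodup_iff.2 (Finset.sort_nodup _ _), ?_⟩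
    rw [← Finset.sort_toFinset (s := S) (r := (· ≤ ·))]
    exact List.toFinset_eq_of_perm _ _ h
  · rintro ⟨h1, h2⟩
    exact perm_of_nodup_toFinset_eq h1 (Finset.sort_nodup _ _)
      (by rw [h2, Finset.sort_toFinset])

/-- the `k` largest elements of `T` -/
def topk (T : Finset ℕ) (k : ℕ) : Finset ℕ :=
  ((T.sort (· ≤ ·)).drop (T.card - k)).toFinset

theorem topk_subset (T : Finset ℕ) (k : ℕ) : topk T k ⊆ T := by
  intro x hx
  rw [topk, List.mem_toFinset] at hx
  have := List.drop_sublist (T.card - k) (T.sort (· ≤ ·))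
  have hx2 := this.mem hx
  rwa [Finset.mem_sort] at hx2

theorem card_topk {T : Finset ℕ} {k : ℕ} (hk : k ≤ T.card) : (topk T k).card = k := by
  rw [topk, List.card_toFinset,
    List.Nodup.dedup ((Finset.sort_nodup _ _).sublist (List.drop_sublist _ _))]
  rw [List.length_drop, Finset.length_sort]
  omega

theorem sdiff_topk (T : Finset ℕ) (k : ℕ) :
    T \ topk T k = ((T.sort (· ≤ ·)).take (T.card - k)).toFinset := by
  have hnd : ((T.sort (· ≤ ·)).take (T.card - k) ++ (T.sort (· ≤ ·)).drop (T.card - k)).Nodup := by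
    rw [List.take_append_drop]; exact Finset.sort_nodup _ _
  rw [List.nodup_append] at hnd
  ext x
  simp only [Finset.mem_sdiff, topk, List.mem_toFinset]
  constructor
  · rintro ⟨hxT, hxd⟩
    have : x ∈ (T.sort (· ≤ ·)).take (T.card - k) ++ (T.sort (· ≤ ·)).drop (T.card - k) := by
      rw [List.take_append_drop, Finset.mem_sort]; exact hxT
    rw [List.mem_append] at this
    tauto
  · intro hx
    refine ⟨?_, fun hc => hnd.2.2 x hx x hc rfl⟩
    have := (List.take_sublist (T.card - k) (T.sort (· ≤ ·))).mem hx
    rwa [Finset.mem_sort] at this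

theorem lt_of_mem_sdiff_topk {T : Finset ℕ} {k : ℕ} {x y : ℕ}
    (hx : x ∈ T \ topk T k) (hy : y ∈ topk T k) : x < y := by
  rw [sdiff_topk, List.mem_toFinset] at hx
  rw [topk, List.mem_toFinset] at hy
  have hs : ((T.sort (· ≤ ·)).take (T.card - k) ++ (T.sort (· ≤ ·)).drop (T.card - k)).Pairwise (· ≤ ·) := by
    rw [List.take_append_drop]; exact Finset.pairwise_sort _ _
  have hnd : ((T.sort (· ≤ ·)).take (T.card - k) ++ (T.sort (· ≤ ·)).drop (T.card - k)).Nodup := by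
    rw [List.take_append_drop]; exact Finset.sort_nodup _ _
  rw [List.pairwise_append] at hs
  rw [List.nodup_append] at hnd
  have hle := hs.2.2 x hx y hy
  have hne : x ≠ y := fun h => hnd.2.2 x hx y hy h
  omega

/-- a subset of given cardinality dominating its complement is unique, hence equals `topk`. -/
theorem eq_topk_of_dominant {T U : Finset ℕ} (hU : U ⊆ T) (hcard : U.card ≤ T.card)
    (hdom : ∀ x ∈ T \ U, ∀ y ∈ U, x < y) : U = topk T U.card := by
  set V := topk T U.card with hV
  have hVsub : V ⊆ T := topk_subset _ _
  have hVcard : V.card = U.card := card_topk hcard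
  have hVdom : ∀ x ∈ T \ V, ∀ y ∈ V, x < y := fun x hx y hy => lt_of_mem_sdiff_topk hx hy
  by_contra hne
  have hUV : ¬ U ⊆ V := by
    intro hsub
    exact hne (Finset.eq_of_subset_of_card_le hsub (le_of_eq hVcard))
  obtain ⟨a, haU, haV⟩ := Finset.not_subset.1 hUV
  have h1 : ∀ v ∈ V, a < v := fun v hv => hVdom a (Finset.mem_sdiff.2 ⟨hU haU, haV⟩) v hv
  have hVU : V ⊆ U := by
    intro v hv
    by_contra hvU
    have := hdom v (Finset.mem_sdiff.2 ⟨hVsub hv, hvU⟩) a haU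
    have := h1 v hv
    omega
  have : V = U := Finset.eq_of_subset_of_card_le hVU (by omega)
  exact haV (this ▸ haU)


theorem avo213_append_iff {A B : List ℕ} {m : ℕ} (hA : ∀ a ∈ A, m < a) (hB : ∀ b ∈ B, m < b)
    (hd : ∀ a ∈ A, ∀ b ∈ B, a ≠ b) :
    AvP P213 (A ++ m :: B) ↔ AvP P213 A ∧ AvP P213 B ∧ ∀ b ∈ B, ∀ a ∈ A, b < a := by
  constructor
  · intro h
    refine ⟨h.sublist (List.sublist_append_left _ _),
      h.sublist ((List.sublist_cons_self _ _).trans (List.sublist_append_right _ _)), ?_⟩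
    intro b hb a ha
    by_contra hab
    have hab' : a < b := lt_of_le_of_ne (not_lt.1 hab) (hd a ha b hb)
    have hsub : [a, m, b] <+ A ++ m :: B := by
      have h1 : [a] <+ A := List.singleton_sublist.2 ha
      have h2 : [m, b] <+ m :: B := (List.singleton_sublist.2 hb).cons₂ m
      exact h1.append h2
    exact h (a) m b hsub ⟨hA a ha, hab'⟩
  · rintro ⟨h1, h2, h3⟩ x y z hsub ⟨hyx, hxz⟩
    rw [List.sublist_append_iff] at hsub
    obtain ⟨l₁, l₂, heq, hs1, hs2⟩ := hsub
    rcases l₁ with _ | ⟨a, _ | ⟨b, _ | ⟨c, _ | ⟨d, l₁⟩⟩⟩⟩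
    · -- l₁ = [] : whole pattern in m :: B
      simp only [List.nil_append] at heq
      subst heq
      rw [List.sublist_cons_iff] at hs2
      rcases hs2 with hs2 | ⟨r, hr, hrs⟩
      · exact h2 x y z hs2 ⟨hyx, hxz⟩
      · have hx : x = m := by injection hr
        have hyr : y ∈ r := by
          have : [y, z] = r.take 2 ++ r.drop 2 → True := fun _ => trivial
          injection hr with h hh
          rw [← hh]; simp
        have hyB : y ∈ B := hrs.mem hyr
        have := hB y hyB
        omega
    · -- l₁ = [a] = [x]
      have hx : a = x ∧ l₂ = [y, z] := by
        refine ⟨?_, ?_⟩ <;> [skip; skip] <;>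
          · injection heq with h hh
            first | exact h.symm | exact hh.symm
      obtain ⟨rfl, rfl⟩ := hx
      have hxA : a ∈ A := hs1.mem (by simp)
      have hzB : z ∈ B := by
        rw [List.sublist_cons_iff] at hs2
        rcases hs2 with hs2 | ⟨r, hr, hrs⟩
        · exact hs2.mem (by simp)
        · have hz : [z] = r.drop 0 → True := fun _ => trivial
          injection hr with h hh
          exact hrs.mem (by rw [← hh]; simp)
      have := h3 z hzB a hxA
      omega
    · -- l₁ = [a, b] = [x, y]
      have hx : a = x ∧ b = y ∧ l₂ = [z] := by
        injection heq with h hh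
        injection hh with h2 h3'
        exact ⟨h.symm, h2.symm, h3'.symm⟩
      obtain ⟨rfl, rfl, rfl⟩ := hx
      have hxA : a ∈ A := hs1.mem (by simp)
      rw [List.sublist_cons_iff] at hs2
      rcases hs2 with hs2 | ⟨r, hr, hrs⟩
      · have hzB : z ∈ B := hs2.mem (by simp)
        have := h3 z hzB a hxA
        omega
      · have hz : z = m := by injection hr
        have := hA a hxA
        omega
    · -- l₁ = [a,b,c] = [x,y,z]
      have hx : a = x ∧ b = y ∧ c = z ∧ l₂ = [] := by
        injection heq with h hh
        injection hh with h2 h3'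
        injection h3' with h4 h5
        exact ⟨h.symm, h2.symm, h4.symm, h5.symm⟩
      obtain ⟨rfl, rfl, rfl, rfl⟩ := hx
      exact h1 a b c hs1 ⟨hyx, hxz⟩
    · -- too long
      have : ([x, y, z] : List ℕ).length = (a :: b :: c :: d :: l₁ ++ l₂).length :=
        congrArg List.length heq
      simp at this

theorem split_take {m : ℕ} {A B : List ℕ} (hA : ∀ a ∈ A, a ≠ m) :
    (A ++ m :: B).takeWhile (· != m) = A ∧ (A ++ m :: B).dropWhile (· != m) = m :: B := by
  induction A with
  | nil => simp [List.takeWhile, List.dropWhile]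
  | cons a A ih =>
    have ha : (a != m) = true := bne_iff_ne.2 (hA a (by simp))
    have := ih (fun x hx => hA x (by simp [hx]))
    rw [List.cons_append, List.takeWhile_cons, List.dropWhile_cons]
    simp only [ha, if_true]
    exact ⟨by rw [this.1], this.2⟩


section Decomp

variable {S : Finset ℕ} (hS : S.Nonempty)

theorem decomp_fwd {l : List ℕ} (hnd : l.Nodup) (htf : l.toFinset = S) (hav : AvP P213 l) :
    ∃ A B : List ℕ, l = A ++ (S.min' hS) :: B ∧
      l.takeWhile (· != S.min' hS) = A ∧ (l.dropWhile (· != S.min' hS)) = S.min' hS :: B ∧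
      A.length < S.card ∧
      A.Nodup ∧ A.toFinset = topk (S.erase (S.min' hS)) A.length ∧ AvP P213 A ∧
      B.Nodup ∧ B.toFinset = (S.erase (S.min' hS)) \ topk (S.erase (S.min' hS)) A.length ∧
      AvP P213 B := by
  set m := S.min' hS with hm
  set S' := S.erase m with hS'
  have hmS : m ∈ S := S.min'_mem hS
  have hmem : ∀ x, x ∈ l ↔ x ∈ S := by
    intro x; rw [← htf, List.mem_toFinset]
  obtain ⟨A, B, hl⟩ := List.append_of_mem ((hmem m).2 hmS)
  have hnd' := hl ▸ hnd
  rw [List.nodup_middle] at hnd'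
  have hmAB : m ∉ A ++ B := (List.nodup_cons.1 hnd').1
  have hndAB : (A ++ B).Nodup := (List.nodup_cons.1 hnd').2
  have hmA : m ∉ A := fun h => hmAB (List.mem_append_left _ h)
  have hmB : m ∉ B := fun h => hmAB (List.mem_append_right _ h)
  have hdisj : ∀ a ∈ A, a ∉ B := by
    rw [List.nodup_append] at hndAB
    exact fun a ha hb => hndAB.2.2 a ha a hb rfl
  have hminS : ∀ x ∈ S', m < x := fun x hx =>
    lt_of_le_of_ne (S.min'_le x (Finset.mem_of_mem_erase hx)) (Ne.symm (Finset.ne_of_mem_erase hx))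
  have hAS' : ∀ a ∈ A, a ∈ S' := by
    intro a ha
    rw [hS', Finset.mem_erase]
    exact ⟨fun h => hmA (h ▸ ha), (hmem a).1 (hl ▸ List.mem_append_left _ ha)⟩
  have hBS' : ∀ b ∈ B, b ∈ S' := by
    intro b hb
    rw [hS', Finset.mem_erase]
    refine ⟨fun h => hmB (h ▸ hb), (hmem b).1 ?_⟩
    rw [hl]; exact List.mem_append_right _ (List.mem_cons_of_mem _ hb)
  have hA : ∀ a ∈ A, m < a := fun a ha => hminS a (hAS' a ha)
  have hB : ∀ b ∈ B, m < b := fun b hb => hminS b (hBS' b hb)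
  have hd : ∀ a ∈ A, ∀ b ∈ B, a ≠ b := fun a ha b hb h => hdisj a ha (h ▸ hb)
  have hsplit := split_take (m := m) (A := A) (B := B) (fun a ha => fun h => hmA (h ▸ ha))
  have havs := (avo213_append_iff hA hB hd).1 (hl ▸ hav)
  obtain ⟨havA, havB, hcross⟩ := havs
  have hndA : A.Nodup := (List.nodup_append.1 hndAB).1
  have hndB : B.Nodup := (List.nodup_append.1 hndAB).2.1
  -- B values are exactly S' minus A values
  have hBtf : B.toFinset = S' \ A.toFinset := by
    ext x
    rw [Finset.mem_sdiff, List.mem_toFinset, List.mem_toFinset]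
    constructor
    · intro hx
      exact ⟨hBS' x hx, fun hc => hdisj x hc hx⟩
    · rintro ⟨hxS', hxA⟩
      have hxl : x ∈ l := (hmem x).2 (Finset.mem_of_mem_erase (hS' ▸ hxS'))
      rw [hl, List.mem_append, List.mem_cons] at hxl
      have hxm : x ≠ m := Finset.ne_of_mem_erase (hS' ▸ hxS')
      tauto
  have hAsub : A.toFinset ⊆ S' := fun x hx => hAS' x (List.mem_toFinset.1 hx)
  have hcardA : A.toFinset.card = A.length := List.toFinset_card_of_nodup hndA
  have hAtf : A.toFinset = topk S' A.length := by
    have := eq_topk_of_dominant (T := S') hAsub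
      (hcardA ▸ Finset.card_le_card hAsub)
      (by
        intro x hx y hy
        rw [← hBtf] at hx
        exact hcross x (List.mem_toFinset.1 hx) y (List.mem_toFinset.1 hy))
    rwa [hcardA] at this
  have hlen : l.length = A.length + 1 + B.length := by
    rw [hl]; simp; omega
  have hScard : S.card = l.length := by
    rw [← htf, List.toFinset_card_of_nodup hnd]
  refine ⟨A, B, hl, ?_, ?_, by omega, hndA, hAtf, havA, hndB, ?_, havB⟩
  · rw [hl]; exact hsplit.1
  · rw [hl]; exact hsplit.2
  · rw [hBtf, hAtf]

theorem decomp_bwd {A B : List ℕ} {k : ℕ} (hk : k < S.card)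
    (hndA : A.Nodup) (hAtf : A.toFinset = topk (S.erase (S.min' hS)) k) (havA : AvP P213 A)
    (hndB : B.Nodup) (hBtf : B.toFinset = (S.erase (S.min' hS)) \ topk (S.erase (S.min' hS)) k)
    (havB : AvP P213 B) :
    (A ++ (S.min' hS) :: B).Nodup ∧ (A ++ (S.min' hS) :: B).toFinset = S ∧
      AvP P213 (A ++ (S.min' hS) :: B) ∧ A.length = k := by
  set m := S.min' hS with hm
  set S' := S.erase m with hS'
  have hmS : m ∈ S := S.min'_mem hS
  have hcard : S.card = S'.card + 1 := by
    rw [hS', Finset.card_erase_of_mem hmS]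
    have := Finset.card_pos.2 hS
    omega
  have hkS' : k ≤ S'.card := by omega
  have hminS : ∀ x ∈ S', m < x := fun x hx =>
    lt_of_le_of_ne (S.min'_le x (Finset.mem_of_mem_erase hx)) (Ne.symm (Finset.ne_of_mem_erase hx))
  have hAS' : ∀ a ∈ A, a ∈ S' := fun a ha =>
    topk_subset S' k (hAtf ▸ List.mem_toFinset.2 ha)
  have hBS' : ∀ b ∈ B, b ∈ S' := fun b hb =>
    Finset.mem_of_subset Finset.sdiff_subset (hBtf ▸ List.mem_toFinset.2 hb)
  have hA : ∀ a ∈ A, m < a := fun a ha => hminS a (hAS' a ha)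
  have hB : ∀ b ∈ B, m < b := fun b hb => hminS b (hBS' b hb)
  have hdisj : ∀ a ∈ A, a ∉ B := by
    intro a ha hb
    have h1 : a ∈ topk S' k := hAtf ▸ List.mem_toFinset.2 ha
    have h2 : a ∈ S' \ topk S' k := hBtf ▸ List.mem_toFinset.2 hb
    exact (Finset.mem_sdiff.1 h2).2 h1
  have hd : ∀ a ∈ A, ∀ b ∈ B, a ≠ b := fun a ha b hb h => hdisj a ha (h ▸ hb)
  have hcross : ∀ b ∈ B, ∀ a ∈ A, b < a := by
    intro b hb a ha
    exact lt_of_mem_sdiff_topk (hBtf ▸ List.mem_toFinset.2 hb) (hAtf ▸ List.mem_toFinset.2 ha)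
  have hmA : m ∉ A := fun h => lt_irrefl m (hA m h)
  have hmB : m ∉ B := fun h => lt_irrefl m (hB m h)
  have hnd : (A ++ m :: B).Nodup := by
    rw [List.nodup_middle, List.nodup_cons, List.nodup_append]
    exact ⟨fun h => (List.mem_append.1 h).elim hmA hmB, hndA, hndB, hd⟩
  have hlenA : A.length = k := by
    rw [← List.toFinset_card_of_nodup hndA, hAtf, card_topk hkS']
  refine ⟨hnd, ?_, (avo213_append_iff hA hB hd).2 ⟨havA, havB, hcross⟩, hlenA⟩
  ext x
  simp only [List.toFinset_append, List.toFinset_cons, Finset.mem_union, Finset.mem_insert]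
  rw [hAtf, hBtf]
  constructor
  · rintro (hx | hx | hx)
    · exact Finset.mem_of_mem_erase (hS' ▸ topk_subset S' k hx)
    · exact hx ▸ hmS
    · exact Finset.mem_of_mem_erase (hS' ▸ (Finset.sdiff_subset hx))
  · intro hx
    by_cases hxm : x = m
    · exact Or.inr (Or.inl hxm)
    · have hxS' : x ∈ S' := Finset.mem_erase.2 ⟨hxm, hx⟩
      by_cases hxt : x ∈ topk S' k
      · exact Or.inl hxt
      · exact Or.inr (Or.inr (Finset.mem_sdiff.2 ⟨hxS', hxt⟩))

end Decomp


open scoped Classical in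
theorem NP213_rec (S : Finset ℕ) (hS : S.Nonempty) :
    NP P213 S = ∑ k ∈ Finset.range S.card,
      NP P213 (topk (S.erase (S.min' hS)) k) *
        NP P213 (S.erase (S.min' hS) \ topk (S.erase (S.min' hS)) k) := by
  classical
  set m := S.min' hS with hm
  set S' := S.erase m with hS'
  have hrhs : ∑ k ∈ Finset.range S.card,
      NP P213 (topk S' k) * NP P213 (S' \ topk S' k)
      = ((Finset.range S.card).sigma (fun k =>
          (((topk S' k).sort (· ≤ ·)).permutations.toFinset.filter (AvP P213)) ×ˢ
          ((((S' \ topk S' k).sort (· ≤ ·)).permutations.toFinset.filter (AvP P213))))).card := by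
    rw [Finset.card_sigma]
    refine Finset.sum_congr rfl fun k _ => ?_
    rw [Finset.card_product]
    rfl
  rw [hrhs, NP]
  refine Finset.card_bij'
    (fun l _ => ⟨(l.takeWhile (· != m)).length,
      (l.takeWhile (· != m), (l.dropWhile (· != m)).tail)⟩)
    (fun p _ => p.2.1 ++ m :: p.2.2) ?_ ?_ ?_ ?_
  · -- forward well-defined
    intro l hl
    rw [Finset.mem_filter, mem_permsOf] at hl
    obtain ⟨⟨hnd, htf⟩, hav⟩ := hl
    obtain ⟨A, B, hlAB, htake, hdrop, hlt, hndA, hAtf, havA, hndB, hBtf, havB⟩ :=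
      decomp_fwd hS hnd htf hav
    rw [← hm] at htake hdrop hAtf hBtf
    rw [Finset.mem_sigma, Finset.mem_range, Finset.mem_product, Finset.mem_filter,
      Finset.mem_filter, mem_permsOf, mem_permsOf]
    rw [htake, hdrop]
    simp only [List.tail_cons]
    exact ⟨hlt, ⟨⟨hndA, hAtf⟩, havA⟩, ⟨⟨hndB, hBtf⟩, havB⟩⟩
  · -- backward well-defined
    rintro ⟨k, A, B⟩ hp
    rw [Finset.mem_sigma, Finset.mem_range, Finset.mem_product, Finset.mem_filter,
      Finset.mem_filter, mem_permsOf, mem_permsOf] at hp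
    obtain ⟨hk, ⟨⟨hndA, hAtf⟩, havA⟩, ⟨hndB, hBtf⟩, havB⟩ := hp
    obtain ⟨hnd, htf, hav, _⟩ := decomp_bwd hS hk hndA hAtf havA hndB hBtf havB
    rw [Finset.mem_filter, mem_permsOf]
    exact ⟨⟨hnd, htf⟩, hav⟩
  · -- left inverse
    intro l hl
    rw [Finset.mem_filter, mem_permsOf] at hl
    obtain ⟨⟨hnd, htf⟩, hav⟩ := hl
    obtain ⟨A, B, hlAB, htake, hdrop, _⟩ := decomp_fwd hS hnd htf hav
    rw [← hm] at htake hdrop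
    dsimp only
    rw [htake, hdrop, List.tail_cons]
    exact hlAB.symm
  · -- right inverse
    rintro ⟨k, A, B⟩ hp
    rw [Finset.mem_sigma, Finset.mem_range, Finset.mem_product, Finset.mem_filter,
      Finset.mem_filter, mem_permsOf, mem_permsOf] at hp
    obtain ⟨hk, ⟨⟨hndA, hAtf⟩, havA⟩, ⟨hndB, hBtf⟩, havB⟩ := hp
    obtain ⟨hnd, htf, hav, hlen⟩ := decomp_bwd hS hk hndA hAtf havA hndB hBtf havB
    have hmA : m ∉ A := by
      intro h
      have := topk_subset S' k (hAtf ▸ List.mem_toFinset.2 h)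
      exact Finset.notMem_erase m S (hS' ▸ this)
    have hsplit := split_take (m := m) (A := A) (B := B) (fun a ha h => hmA (h ▸ ha))
    dsimp only
    rw [hsplit.1, hsplit.2, List.tail_cons, hlen]


theorem NP213_empty : NP P213 ∅ = 1 := by
  classical
  rw [NP]
  have h1 : (Finset.sort (∅ : Finset ℕ) (· ≤ ·)) = [] := Finset.sort_empty _
  rw [h1]
  have h2 : ([] : List ℕ).permutations = [[]] := List.permutations_nil
  rw [h2]
  have h3 : AvP P213 [] := by
    intro x y z hsub
    have := hsub.length_le
    simp at this
  simp [Finset.filter_singleton, h3]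

theorem NP213_catalan : ∀ (n : ℕ) (S : Finset ℕ), S.card = n → NP P213 S = catalan n := by
  intro n
  induction n using Nat.strong_induction_on with
  | _ n ih =>
    intro S hcard
    match n, hcard with
    | 0, hcard =>
      rw [Finset.card_eq_zero] at hcard
      subst hcard
      rw [NP213_empty, catalan_zero]
    | (n + 1), hcard =>
      have hS : S.Nonempty := Finset.card_pos.1 (by omega)
      set m := S.min' hS with hm
      set S' := S.erase m with hS'
      have hmS : m ∈ S := S.min'_mem hS
      have hcS' : S'.card = n := by
        rw [hS', Finset.card_erase_of_mem hmS, hcard]; omega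
      rw [NP213_rec S hS, hcard]
      rw [catalan_succ]
      rw [← Fin.sum_univ_eq_sum_range (fun k =>
        NP P213 (topk S' k) * NP P213 (S' \ topk S' k))]
      refine Finset.sum_congr rfl fun k _ => ?_
      have hk : (k : ℕ) ≤ n := by omega
      have h1 : (topk S' k).card = k := by rw [card_topk (by omega)]
      have h2 : (S' \ topk S' k).card = n - k := by
        rw [Finset.card_sdiff_of_subset (topk_subset _ _), hcS', h1]
      rw [ih k (by omega) _ h1, ih (n - k) (by omega) _ h2]


theorem avP312_iff_reverse (l : List ℕ) : AvP P312 l ↔ AvP P213 l.reverse := by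
  constructor
  · intro h x y z hsub hP
    have h2 : [z, y, x] <+ l := by
      have := hsub.reverse
      simpa using this
    exact h z y x h2 ⟨hP.1, hP.2⟩
  · intro h x y z hsub hP
    have h2 : [z, y, x] <+ l.reverse := by
      have := hsub.reverse
      simpa using this
    exact h z y x h2 ⟨hP.1, hP.2⟩

open scoped Classical in
theorem NP312_eq_NP213 (S : Finset ℕ) : NP P312 S = NP P213 S := by
  classical
  rw [NP, NP]
  refine Finset.card_bij' (fun l _ => l.reverse) (fun l _ => l.reverse) ?_ ?_
    (fun l _ => List.reverse_reverse l) (fun l _ => List.reverse_reverse l)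
  · intro l hl
    rw [Finset.mem_filter, mem_permsOf] at hl ⊢
    refine ⟨⟨List.nodup_reverse.2 hl.1.1, by rw [List.toFinset_reverse]; exact hl.1.2⟩, ?_⟩
    exact (avP312_iff_reverse l).1 hl.2
  · intro l hl
    rw [Finset.mem_filter, mem_permsOf] at hl ⊢
    refine ⟨⟨List.nodup_reverse.2 hl.1.1, by rw [List.toFinset_reverse]; exact hl.1.2⟩, ?_⟩
    rw [avP312_iff_reverse, List.reverse_reverse]
    exact hl.2

open scoped Classical in
theorem head_strip (P : ℕ → ℕ → ℕ → Prop) (hP : ∀ y z, ¬ P 0 y z) {n : ℕ} (hn : 0 < n) :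
    ((((Finset.range n).sort (· ≤ ·)).permutations.toFinset).filter
        (fun l => l.head? = some 0 ∧ AvP P l)).card
      = NP P ((Finset.range n).erase 0) := by
  classical
  rw [NP]
  have h0n : (0 : ℕ) ∈ Finset.range n := Finset.mem_range.2 hn
  refine Finset.card_bij' (fun l _ => l.tail) (fun t _ => 0 :: t) ?_ ?_ ?_ ?_
  · intro l hl
    rw [Finset.mem_filter, mem_permsOf] at hl
    obtain ⟨⟨hnd, htf⟩, hhead, hav⟩ := hl
    obtain ⟨t, rfl⟩ : ∃ t, l = 0 :: t := by
      cases l with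
      | nil => simp at hhead
      | cons a t =>
        simp only [List.head?_cons, Option.some.injEq] at hhead
        exact ⟨t, by rw [hhead]⟩
    rw [Finset.mem_filter, mem_permsOf]
    simp only [List.tail_cons]
    rw [List.nodup_cons] at hnd
    refine ⟨⟨hnd.2, ?_⟩, hav.sublist (List.sublist_cons_self _ _)⟩
    ext x
    rw [List.mem_toFinset, Finset.mem_erase, ← htf]
    simp only [List.toFinset_cons, Finset.mem_insert, List.mem_toFinset]
    constructor
    · intro hx
      exact ⟨fun h => hnd.1 (h ▸ hx), Or.inr hx⟩
    · rintro ⟨hne, hx | hx⟩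
      · exact absurd hx hne
      · exact hx
  · intro t ht
    rw [Finset.mem_filter, mem_permsOf] at ht
    obtain ⟨⟨hnd, htf⟩, hav⟩ := ht
    rw [Finset.mem_filter, mem_permsOf]
    have h0t : 0 ∉ t := by
      intro h
      have := htf ▸ List.mem_toFinset.2 h
      exact (Finset.mem_erase.1 this).1 rfl
    refine ⟨⟨List.nodup_cons.2 ⟨h0t, hnd⟩, ?_⟩, rfl, ?_⟩
    · rw [List.toFinset_cons, htf, Finset.insert_erase h0n]
    · intro x y z hsub hPxyz
      rw [List.sublist_cons_iff] at hsub
      rcases hsub with hsub | ⟨r, hr, hrs⟩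
      · exact hav x y z hsub hPxyz
      · have hx : x = 0 := by injection hr
        exact hP y z (hx ▸ hPxyz)
  · intro l hl
    rw [Finset.mem_filter] at hl
    obtain ⟨-, hhead, -⟩ := hl
    cases l with
    | nil => simp at hhead
    | cons a t =>
      simp only [List.head?_cons, Option.some.injEq] at hhead
      simp [hhead]
  · intro t _
    rfl


section PermList

variable {n : ℕ}

def toList (α : Equiv.Perm (Fin n)) : List ℕ := List.ofFn (fun i => (α i : ℕ))

theorem length_toList (α : Equiv.Perm (Fin n)) : (toList α).length = n :=
  List.length_ofFn

theorem getElem_toList (α : Equiv.Perm (Fin n)) (i : ℕ) (h : i < (toList α).length) :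
    (toList α)[i] = (α ⟨i, by rwa [length_toList] at h⟩ : ℕ) := by
  simp only [toList, List.getElem_ofFn]

theorem nodup_toList (α : Equiv.Perm (Fin n)) : (toList α).Nodup := by
  rw [toList, List.nodup_ofFn]
  exact fun i j h => α.injective (Fin.val_injective h)

theorem toFinset_toList (α : Equiv.Perm (Fin n)) : (toList α).toFinset = Finset.range n := by
  ext x
  rw [List.mem_toFinset, toList, List.mem_ofFn, Finset.mem_range]
  constructor
  · rintro ⟨i, rfl⟩
    exact (α i).isLt
  · intro hx
    exact ⟨α.symm ⟨x, hx⟩, by simp⟩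

theorem pattern_iff (P : ℕ → ℕ → ℕ → Prop) (α : Equiv.Perm (Fin n)) :
    (∃ i j k : Fin n, i < j ∧ j < k ∧ P (α i : ℕ) (α j : ℕ) (α k : ℕ))
      ↔ ∃ x y z : ℕ, [x, y, z] <+ toList α ∧ P x y z := by
  constructor
  · rintro ⟨i, j, k, hij, hjk, hP⟩
    refine ⟨(α i : ℕ), (α j : ℕ), (α k : ℕ), ?_, hP⟩
    have hk : (k : ℕ) < (toList α).length := by rw [length_toList]; exact k.isLt
    have := trio_sublist (toList α) (i := (i : ℕ)) (j := (j : ℕ)) (k := (k : ℕ)) hij hjk hk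
    simpa only [getElem_toList, Fin.eta] using this
  · rintro ⟨x, y, z, hsub, hP⟩
    obtain ⟨is, heq, hpw⟩ := List.sublist_eq_map_getElem hsub
    have hlen3 : is.length = 3 := by
      have := congrArg List.length heq
      simpa using this.symm
    rcases is with _ | ⟨i, _ | ⟨j, _ | ⟨k, _ | ⟨d, is⟩⟩⟩⟩ <;> simp at hlen3
    simp only [List.map] at heq
    have hx : x = (toList α)[(i : ℕ)] := by injection heq
    have hyz : y = (toList α)[(j : ℕ)] ∧ z = (toList α)[(k : ℕ)] := by
      injection heq with h1 h2
      injection h2 with h3 h4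
      injection h4 with h5 h6
      exact ⟨h3, h5⟩
    obtain ⟨hy, hz⟩ := hyz
    rw [List.pairwise_cons, List.pairwise_cons] at hpw
    have hij : i < j := hpw.1 j (by simp)
    have hjk : j < k := hpw.2.1 k (by simp)
    have hi : (i : ℕ) < n := by have := i.isLt; have hL := length_toList α; omega
    have hj : (j : ℕ) < n := by have := j.isLt; have hL := length_toList α; omega
    have hk : (k : ℕ) < n := by have := k.isLt; have hL := length_toList α; omega
    refine ⟨⟨i, hi⟩, ⟨j, hj⟩, ⟨k, hk⟩, hij, hjk, ?_⟩
    rw [← getElem_toList α i i.isLt, ← getElem_toList α j j.isLt, ← getElem_toList α k k.isLt,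
      ← hx, ← hy, ← hz]
    exact hP

theorem avP_iff_not_exists (P : ℕ → ℕ → ℕ → Prop) (l : List ℕ) :
    AvP P l ↔ ¬ ∃ x y z : ℕ, [x, y, z] <+ l ∧ P x y z := by
  rw [AvP]
  push_neg
  tauto

noncomputable def permOfList (l : List ℕ) (hnd : l.Nodup) (htf : l.toFinset = Finset.range n) :
    Equiv.Perm (Fin n) := by
  have hlen : l.length = n := by
    rw [← List.toFinset_card_of_nodup hnd, htf, Finset.card_range]
  have hval : ∀ (i : ℕ) (h : i < n), l[i]'(by omega) < n := by
    intro i h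
    have : l[i]'(by omega) ∈ l := List.getElem_mem _
    have := htf ▸ List.mem_toFinset.2 this
    rwa [Finset.mem_range] at this
  refine Equiv.ofBijective (fun i => ⟨l[(i : ℕ)]'(by omega), hval _ i.isLt⟩)
    (Finite.injective_iff_bijective.1 ?_)
  intro i j h
  have := List.nodup_iff_injective_get.1 hnd
    (show l.get ⟨i, by omega⟩ = l.get ⟨j, by omega⟩ by
      simpa [List.get_eq_getElem, Fin.ext_iff] using h)
  rwa [Fin.mk.injEq, ← Fin.ext_iff] at this

theorem permOfList_apply (l : List ℕ) (hnd : l.Nodup) (htf : l.toFinset = Finset.range n)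
    (i : Fin n) : ((permOfList l hnd htf i : Fin n) : ℕ) = l[(i : ℕ)]'(by
      rw [← List.toFinset_card_of_nodup hnd, htf, Finset.card_range] at *; exact i.isLt) := rfl

theorem toList_permOfList (l : List ℕ) (hnd : l.Nodup) (htf : l.toFinset = Finset.range n) :
    toList (permOfList l hnd htf) = l := by
  have hlen : l.length = n := by
    rw [← List.toFinset_card_of_nodup hnd, htf, Finset.card_range]
  apply List.ext_getElem
  · rw [length_toList, hlen]
  · intro i h1 h2
    rw [getElem_toList, permOfList_apply]

open scoped Classical in
theorem card_subtype_eq (hn : 0 < n) (P : ℕ → ℕ → ℕ → Prop) :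
    Nat.card {α : Equiv.Perm (Fin n) // α ⟨0, hn⟩ = ⟨0, hn⟩ ∧
        ¬ ∃ i j k : Fin n, i < j ∧ j < k ∧ P (α i : ℕ) (α j : ℕ) (α k : ℕ)}
      = ((((Finset.range n).sort (· ≤ ·)).permutations.toFinset).filter
          (fun l => l.head? = some 0 ∧ AvP P l)).card := by
  classical
  have hmem : ∀ l : List ℕ, l ∈ (((Finset.range n).sort (· ≤ ·)).permutations.toFinset).filter
      (fun l => l.head? = some 0 ∧ AvP P l) → l.Nodup ∧ l.toFinset = Finset.range n :=
    fun l h => mem_permsOf.1 (Finset.mem_filter.1 h).1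
  have key : ∀ α : Equiv.Perm (Fin n),
      (α ⟨0, hn⟩ = ⟨0, hn⟩ ∧
        ¬ ∃ i j k : Fin n, i < j ∧ j < k ∧ P (α i : ℕ) (α j : ℕ) (α k : ℕ)) ↔
      toList α ∈ (((Finset.range n).sort (· ≤ ·)).permutations.toFinset).filter
        (fun l => l.head? = some 0 ∧ AvP P l) := by
    intro α
    rw [Finset.mem_filter, mem_permsOf]
    have hhead : (toList α).head? = some ((α ⟨0, hn⟩ : Fin n) : ℕ) := by
      rw [List.head?_eq_getElem?, List.getElem?_eq_getElem (by rw [length_toList]; exact hn)]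
      rw [getElem_toList]
    constructor
    · rintro ⟨h0, hnp⟩
      refine ⟨⟨nodup_toList α, toFinset_toList α⟩, ?_, ?_⟩
      · rw [hhead, h0]
      · rw [avP_iff_not_exists]
        rw [pattern_iff P α] at hnp
        exact hnp
    · rintro ⟨-, hhead2, hav⟩
      constructor
      · rw [hhead] at hhead2
        injection hhead2 with h
        exact Fin.ext h
      · rw [pattern_iff P α, ← avP_iff_not_exists]
        exact hav
  have e : {α : Equiv.Perm (Fin n) // α ⟨0, hn⟩ = ⟨0, hn⟩ ∧
      ¬ ∃ i j k : Fin n, i < j ∧ j < k ∧ P (α i : ℕ) (α j : ℕ) (α k : ℕ)} ≃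
      {l // l ∈ (((Finset.range n).sort (· ≤ ·)).permutations.toFinset).filter
        (fun l => l.head? = some 0 ∧ AvP P l)} := by
    refine Equiv.ofBijective (fun p => ⟨toList p.1, (key p.1).1 p.2⟩) ⟨?_, ?_⟩
    · intro p p' hpp
      have h : toList p.1 = toList p'.1 := congrArg Subtype.val hpp
      apply Subtype.ext
      apply Equiv.ext
      intro i
      apply Fin.ext
      have h1 := getElem_toList p.1 (i : ℕ) (by rw [length_toList]; exact i.isLt)
      have h2 := getElem_toList p'.1 (i : ℕ) (by rw [length_toList]; exact i.isLt)
      simp only [Fin.eta] at h1 h2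
      have h3 := congrArg (fun L : List ℕ => L[(i : ℕ)]?) h
      simp only [List.getElem?_eq_getElem (show (i:ℕ) < (toList p.1).length by
          rw [length_toList]; exact i.isLt),
        List.getElem?_eq_getElem (show (i:ℕ) < (toList p'.1).length by
          rw [length_toList]; exact i.isLt), Option.some.injEq] at h3
      rw [← h1, ← h2]
      exact h3
    · intro q
      obtain ⟨hnd, htf⟩ := hmem q.1 q.2
      have hround := toList_permOfList q.1 hnd htf
      refine ⟨⟨permOfList q.1 hnd htf, ?_⟩, ?_⟩
      · rw [key, hround]
        exact q.2
      · exact Subtype.ext hround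
  rw [Nat.card_congr e, Nat.card_eq_fintype_card, Fintype.card_coe]

end PermList

end Stmt15

open Stmt15 in
/-- The number of `213`-avoiding permutations of `{1,…,n}` fixing `1` equals the number of
`312`-avoiding permutations of `{1,…,n}` fixing `1`, and both equal the Catalan number
`C_{n-1}`. -/
theorem stmt15 (n : ℕ) (hn : 0 < n) :
    Nat.card {α : Equiv.Perm (Fin n) // α ⟨0, hn⟩ = ⟨0, hn⟩ ∧
        ¬ ∃ i j k : Fin n, i < j ∧ j < k ∧ α j < α i ∧ α i < α k}
      = Nat.card {α : Equiv.Perm (Fin n) // α ⟨0, hn⟩ = ⟨0, hn⟩ ∧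
        ¬ ∃ i j k : Fin n, i < j ∧ j < k ∧ α j < α k ∧ α k < α i}
    ∧ Nat.card {α : Equiv.Perm (Fin n) // α ⟨0, hn⟩ = ⟨0, hn⟩ ∧
        ¬ ∃ i j k : Fin n, i < j ∧ j < k ∧ α j < α i ∧ α i < α k}
      = catalan (n - 1) := by
  have h0e : ((Finset.range n).erase 0).card = n - 1 := by
    rw [Finset.card_erase_of_mem (Finset.mem_range.2 hn), Finset.card_range]
  have e213 : {α : Equiv.Perm (Fin n) // α ⟨0, hn⟩ = ⟨0, hn⟩ ∧
        ¬ ∃ i j k : Fin n, i < j ∧ j < k ∧ α j < α i ∧ α i < α k} ≃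
      {α : Equiv.Perm (Fin n) // α ⟨0, hn⟩ = ⟨0, hn⟩ ∧
        ¬ ∃ i j k : Fin n, i < j ∧ j < k ∧ P213 (α i : ℕ) (α j : ℕ) (α k : ℕ)} :=
    Equiv.subtypeEquivRight fun α => by
      simp only [P213, Fin.lt_def]
  have e312 : {α : Equiv.Perm (Fin n) // α ⟨0, hn⟩ = ⟨0, hn⟩ ∧
        ¬ ∃ i j k : Fin n, i < j ∧ j < k ∧ α j < α k ∧ α k < α i} ≃
      {α : Equiv.Perm (Fin n) // α ⟨0, hn⟩ = ⟨0, hn⟩ ∧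
        ¬ ∃ i j k : Fin n, i < j ∧ j < k ∧ P312 (α i : ℕ) (α j : ℕ) (α k : ℕ)} :=
    Equiv.subtypeEquivRight fun α => by
      simp only [P312, Fin.lt_def]
  have h213 : Nat.card {α : Equiv.Perm (Fin n) // α ⟨0, hn⟩ = ⟨0, hn⟩ ∧
        ¬ ∃ i j k : Fin n, i < j ∧ j < k ∧ α j < α i ∧ α i < α k} = catalan (n - 1) := by
    rw [Nat.card_congr e213, card_subtype_eq hn P213,
      head_strip P213 (fun y z h => Nat.not_lt_zero y h.1) hn,
      NP213_catalan (n - 1) _ h0e]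
  have h312 : Nat.card {α : Equiv.Perm (Fin n) // α ⟨0, hn⟩ = ⟨0, hn⟩ ∧
        ¬ ∃ i j k : Fin n, i < j ∧ j < k ∧ α j < α k ∧ α k < α i} = catalan (n - 1) := by
    rw [Nat.card_congr e312, card_subtype_eq hn P312,
      head_strip P312 (fun y z h => Nat.not_lt_zero z h.2) hn,
      NP312_eq_NP213, NP213_catalan (n - 1) _ h0e]
  exact ⟨h213.trans h312.symm, h213⟩
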